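/- arXiv:2207.09926 — 3 statements merged into one kernel-verified Lean document; each statement's English description precedes it below -/
import Mathlib

section
/- The one-dimensional quadratic-phase Fourier transform Q_μ[f](w) = ∫_ℝ f(x) Λ_μ(x,w) dx is inverted by f(x) = ∫_ℝ Q_μ[f](w) conj(Λ_μ(x,w)) dw, for f ∈ L¹(ℝ) ∩ L²(ℝ) with Q_μ[f] ∈ L¹(ℝ), with equality almost everywhere. -/
open MeasureTheory Complex
open scoped ENNReal

noncomputable section

structure QP where
  a : ℝ
  b : ℝ
  c : ℝ
  d : ℝ
  e : ℝ

def phase (μ : QP) (x w : ℝ) : ℝ :=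
  μ.a * x^2 + μ.b * x * w + μ.c * w^2 + μ.d * x + μ.e * w

/-- principal square root in ℂ -/
def csqrt (z : ℂ) : ℂ := z ^ (1/2 : ℂ)

/-- quadratic-phase kernel Λ_μ(x,w) -/
def Λ (μ : QP) (x w : ℝ) : ℂ :=
  csqrt (μ.b * Complex.I / (2 * Real.pi)) * Complex.exp (-(phase μ x w) * Complex.I)

/-- one-dimensional quadratic-phase Fourier transform -/
def QPFT (μ : QP) (f : ℝ → ℂ) (w : ℝ) : ℂ :=
  ∫ x : ℝ, f x * Λ μ x w

open Real
open scoped FourierTransform RealInnerProductSpace ContDiff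

/-- A smooth compactly supported real function, viewed as a complex Schwartz function. -/
def toCS (ψ : ℝ → ℝ) (hψ : ContDiff ℝ ∞ ψ) (hsupp : HasCompactSupport ψ) :
    SchwartzMap ℝ ℂ where
  toFun := fun x => (ψ x : ℂ)
  smooth' := Complex.ofRealCLM.contDiff.comp hψ
  decay' := by
    intro k n
    have hsm : ContDiff ℝ ∞ (fun x : ℝ => (ψ x : ℂ)) := Complex.ofRealCLM.contDiff.comp hψ
    have h1 : HasCompactSupport (fun x : ℝ => (ψ x : ℂ)) :=
      hsupp.comp_left (g := Complex.ofReal) Complex.ofReal_zero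
    have h2 : HasCompactSupport (iteratedFDeriv ℝ n (fun x : ℝ => (ψ x : ℂ))) :=
      h1.iteratedFDeriv n
    have h3 : Continuous (fun x : ℝ => ‖x‖ ^ k * ‖iteratedFDeriv ℝ n (fun y : ℝ => (ψ y : ℂ)) x‖) :=
      ((continuous_norm).pow k).mul (hsm.continuous_iteratedFDeriv (by exact_mod_cast le_top)).norm
    have h4 : HasCompactSupport
        (fun x : ℝ => ‖x‖ ^ k * ‖iteratedFDeriv ℝ n (fun y : ℝ => (ψ y : ℂ)) x‖) :=
      (h2.norm).mul_left
    obtain ⟨C, hC⟩ := h3.bounded_above_of_compact_support h4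
    exact ⟨C, fun x => (le_abs_self _).trans (hC x)⟩

/-- The multiplication formula for the Fourier transform on `ℝ`. -/
lemma mult_formula {a b : ℝ → ℂ} (ha : Integrable a) (hb : Integrable b) :
    ∫ ξ : ℝ, 𝓕 a ξ * b ξ = ∫ x : ℝ, a x * 𝓕 b x := by
  have h := VectorFourier.integral_fourierIntegral_smul_eq_flip (L := innerₗ ℝ)
    Real.continuous_fourierChar continuous_inner ha hb
  rw [show (innerₗ ℝ).flip = innerₗ ℝ by
    apply LinearMap.ext; intro x; apply LinearMap.ext; intro y; simp [real_inner_comm]] at h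
  simp only [smul_eq_mul] at h; exact h

/-- Almost-everywhere Fourier inversion for integrable functions with
integrable Fourier transform. -/
lemma ae_fourier_inversion {g : ℝ → ℂ} (hg : Integrable g) (hFg : Integrable (𝓕 g)) :
    ∀ᵐ x : ℝ, g x = 𝓕⁻ (𝓕 g) x := by
  have hu_cont : Continuous (𝓕⁻ (𝓕 g)) := by
    have h1 : Continuous (𝓕 (𝓕 g)) :=
      VectorFourier.fourierIntegral_continuous Real.continuous_fourierChar continuous_inner hFg
    have h2 := h1.comp continuous_neg
    have : 𝓕⁻ (𝓕 g) = (𝓕 (𝓕 g)) ∘ (fun x => -x) := by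
      funext x; exact Real.fourierInv_eq_fourier_neg _ _
    rw [this]; exact h2
  apply ae_eq_of_integral_contDiff_smul_eq hg.locallyIntegrable hu_cont.locallyIntegrable
  intro ψ hψ hψsupp
  set Φ : SchwartzMap ℝ ℂ := toCS ψ hψ hψsupp with hΦdef
  have hΦ : ∀ x : ℝ, Φ x = (ψ x : ℂ) := fun x => rfl
  set Ψ : SchwartzMap ℝ ℂ := (SchwartzMap.fourierTransformCLE ℂ (SchwartzMap ℝ ℂ)).symm Φ with hΨdef
  have hΨ : 𝓕 (⇑Ψ) = ⇑Φ := by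
    have h := (SchwartzMap.fourierTransformCLE ℂ (SchwartzMap ℝ ℂ)).apply_symm_apply Φ
    calc 𝓕 ⇑Ψ = ⇑(SchwartzMap.fourierTransformCLE ℂ (SchwartzMap ℝ ℂ) Ψ) := by
          rfl
      _ = ⇑Φ := by rw [h]
  have hInvΦ : 𝓕 (fun x : ℝ => Φ (-x)) = ⇑Ψ := by
    rw [← Real.fourierInv_eq_fourier_comp_neg]
    rw [← hΨ]
    exact Ψ.continuous.fourierInv_fourier_eq Ψ.integrable (hΨ ▸ Φ.integrable)
  have hnegΦ : Integrable (fun x : ℝ => (Φ (-x) : ℂ)) := by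
    have := Φ.integrable.comp_mul_left' (R := (-1 : ℝ)) (by norm_num)
    simpa using this
  have L1 : ∫ x : ℝ, ψ x • g x = ∫ ξ : ℝ, 𝓕 g ξ * Ψ ξ := by
    rw [mult_formula hg Ψ.integrable]
    simp_rw [hΨ]
    congr 1; funext x
    rw [hΦ x, Complex.real_smul, mul_comm]
  have R1 : ∫ x : ℝ, ψ x • 𝓕⁻ (𝓕 g) x = ∫ ξ : ℝ, 𝓕 g ξ * Ψ ξ := by
    have e1 : ∫ x : ℝ, ψ x • 𝓕⁻ (𝓕 g) x
        = ∫ x : ℝ, (fun y : ℝ => Φ (-y) * 𝓕 (𝓕 g) y) ((-1 : ℝ) * x) := by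
      congr 1; funext x
      simp only [neg_one_mul, neg_neg]
      rw [hΦ x, Complex.real_smul, Real.fourierInv_eq_fourier_neg]
    have e3 := MeasureTheory.Measure.integral_comp_mul_left
      (fun y : ℝ => Φ (-y) * 𝓕 (𝓕 g) y) (-1 : ℝ)
    rw [e1, e3]
    have e2 : ∫ y : ℝ, Φ (-y) * 𝓕 (𝓕 g) y = ∫ x : ℝ, 𝓕 (𝓕 g) x * Φ (-x) := by
      congr 1; funext y; ring
    rw [show |((-1 : ℝ))⁻¹| = 1 by norm_num]
    rw [one_smul, e2, mult_formula hFg hnegΦ]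
    simp_rw [hInvΦ]
  rw [L1, R1]

/-- Inversion formula for the one-dimensional QPFT:
`f(x) = ∫ Q_μ[f](w) conj(Λ_μ(x,w)) dw` a.e. -/
theorem qpft_inversion (μ : QP) (hb : μ.b ≠ 0) (f : ℝ → ℂ)
    (hf1 : Integrable f) (hf2 : MemLp f 2 volume)
    (hQf : Integrable (QPFT μ f)) :
    ∀ᵐ x : ℝ, f x = ∫ w : ℝ, QPFT μ f w * (starRingEnd ℂ) (Λ μ x w) := by
  have hπ : Real.pi ≠ 0 := Real.pi_ne_zero
  have h2π : ((2 : ℂ) * (π : ℂ)) ≠ 0 := by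
    simp [Real.pi_ne_zero]
  have hz : ((μ.b : ℂ) * Complex.I / (2 * (π : ℂ))) ≠ 0 :=
    div_ne_zero (mul_ne_zero (Complex.ofReal_ne_zero.mpr hb) Complex.I_ne_zero) h2π
  set K : ℂ := csqrt (μ.b * Complex.I / (2 * π)) with hK
  have hK0 : K ≠ 0 := by
    rw [hK, csqrt, Ne, Complex.cpow_eq_zero_iff]
    push_neg
    intro h
    exact absurd h hz
  set g : ℝ → ℂ := fun x => Complex.exp ((-(μ.a * x^2 + μ.d * x) : ℝ) * Complex.I) * f x
    with hgdef
  have hg : Integrable g := by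
    apply hf1.bdd_mul
    · exact (Complex.continuous_exp.comp (by continuity)).aestronglyMeasurable
    · exact Filter.Eventually.of_forall (fun x => le_of_eq (Complex.norm_exp_ofReal_mul_I _))
  have stepA : ∀ w : ℝ, QPFT μ f w
      = K * Complex.exp ((-(μ.c * w^2 + μ.e * w) : ℝ) * Complex.I)
        * 𝓕 g (μ.b * w / (2 * π)) := by
    intro w
    rw [QPFT, Real.fourier_real_eq_integral_exp_smul]
    simp_rw [smul_eq_mul]
    rw [← integral_const_mul]
    congr 1; funext x
    have hexp : Complex.exp (-(phase μ x w) * Complex.I)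
        = Complex.exp ((-(μ.c * w^2 + μ.e * w) : ℝ) * Complex.I)
          * (Complex.exp ((-2 * π * x * (μ.b * w / (2 * π)) : ℝ) * Complex.I)
            * Complex.exp ((-(μ.a * x^2 + μ.d * x) : ℝ) * Complex.I)) := by
      rw [← Complex.exp_add, ← Complex.exp_add, ← add_mul, ← add_mul]
      congr 1
      push_cast
      rw [show ((-2 : ℂ) * π * x * (↑μ.b * w / (2 * π)) : ℂ)
          = -(μ.b * x * w) * ((2 * π) / (2 * π)) by ring]
      rw [div_self h2π]
      rw [phase]; push_cast; ring
    rw [Λ, hexp, ← hK]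
    ring
  -- integrability of `𝓕 g`
  have hRne : μ.b / (2 * π) ≠ 0 := div_ne_zero hb (by positivity)
  have hFg' : Integrable (fun w : ℝ => 𝓕 g (μ.b / (2 * π) * w)) := by
    have hm : Integrable (fun w : ℝ =>
        (K⁻¹ * Complex.exp (((μ.c * w^2 + μ.e * w) : ℝ) * Complex.I)) * QPFT μ f w) := by
      apply hQf.bdd_mul (c := ‖K⁻¹‖)
      · exact (continuous_const.mul
          (Complex.continuous_exp.comp (by continuity))).aestronglyMeasurable
      · exact Filter.Eventually.of_forall (fun w => by
          rw [norm_mul, Complex.norm_exp_ofReal_mul_I, mul_one])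
    have heq : (fun w : ℝ =>
        (K⁻¹ * Complex.exp (((μ.c * w^2 + μ.e * w) : ℝ) * Complex.I)) * QPFT μ f w)
        = fun w : ℝ => 𝓕 g (μ.b / (2 * π) * w) := by
      funext w
      rw [stepA w, show μ.b * w / (2 * π) = μ.b / (2 * π) * w by ring]
      have he : Complex.exp (((μ.c * w^2 + μ.e * w) : ℝ) * Complex.I)
          * Complex.exp ((-(μ.c * w^2 + μ.e * w) : ℝ) * Complex.I) = 1 := by
        rw [← Complex.exp_add, show (((μ.c * w^2 + μ.e * w) : ℝ) : ℂ) * Complex.I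
          + ((-(μ.c * w^2 + μ.e * w) : ℝ) : ℂ) * Complex.I = 0 by push_cast; ring,
          Complex.exp_zero]
      calc K⁻¹ * Complex.exp (((μ.c * w^2 + μ.e * w) : ℝ) * Complex.I)
            * (K * Complex.exp ((-(μ.c * w^2 + μ.e * w) : ℝ) * Complex.I)
              * 𝓕 g (μ.b / (2 * π) * w))
          = (K⁻¹ * K) * ((Complex.exp (((μ.c * w^2 + μ.e * w) : ℝ) * Complex.I)
              * Complex.exp ((-(μ.c * w^2 + μ.e * w) : ℝ) * Complex.I))
              * 𝓕 g (μ.b / (2 * π) * w)) := by ring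
        _ = 𝓕 g (μ.b / (2 * π) * w) := by
            rw [inv_mul_cancel₀ hK0, he, one_mul, one_mul]
    rwa [heq] at hm
  have hFg : Integrable (𝓕 g) :=
    (MeasureTheory.integrable_comp_mul_left_iff (𝓕 g) hRne).1 hFg'
  -- the modulus-squared of the kernel constant
  have hKK : K * (starRingEnd ℂ) K = ((|μ.b| / (2 * π) : ℝ) : ℂ) := by
    rw [Complex.mul_conj]
    congr 1
    rw [Complex.normSq_eq_norm_sq, hK, csqrt, Complex.norm_cpow_of_ne_zero hz]
    have h12 : ((1 : ℂ)/2).re = (1/2 : ℝ) := by norm_num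
    have h12' : ((1 : ℂ)/2).im = 0 := by norm_num
    rw [h12, h12', mul_zero, Real.exp_zero, div_one]
    have habsz : ‖((μ.b : ℂ) * Complex.I / (2 * (π : ℂ)))‖ = |μ.b| / (2 * π) := by
      rw [norm_div, norm_mul, norm_mul, Complex.norm_real, Complex.norm_I, Complex.norm_two,
        Complex.norm_real, Real.norm_eq_abs, Real.norm_eq_abs, abs_of_pos Real.pi_pos, mul_one]
    rw [habsz, ← Real.rpow_natCast _ 2, ← Real.rpow_mul (by positivity)]
    norm_num
  have hconjΛ : ∀ x w : ℝ, (starRingEnd ℂ) (Λ μ x w)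
      = (starRingEnd ℂ) K * Complex.exp ((phase μ x w : ℝ) * Complex.I) := by
    intro x w
    rw [Λ, ← hK, map_mul, ← Complex.exp_conj]
    congr 1
    simp [map_mul, Complex.conj_ofReal, Complex.conj_I]
  have stepD : ∀ x : ℝ, (∫ w : ℝ, QPFT μ f w * (starRingEnd ℂ) (Λ μ x w))
      = Complex.exp (((μ.a * x^2 + μ.d * x) : ℝ) * Complex.I) * 𝓕⁻ (𝓕 g) x := by
    intro x
    set h : ℝ → ℂ := fun ξ => Complex.exp ((2 * π * (ξ * x) : ℝ) * Complex.I) * 𝓕 g ξ with hh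
    set C : ℂ := ((|μ.b| / (2 * π) : ℝ) : ℂ)
      * Complex.exp (((μ.a * x^2 + μ.d * x) : ℝ) * Complex.I) with hC
    have e1 : ∀ w : ℝ, QPFT μ f w * (starRingEnd ℂ) (Λ μ x w)
        = C * h (μ.b / (2 * π) * w) := by
      intro w
      rw [stepA w, hconjΛ x w, hh, hC]
      simp only
      rw [show μ.b * w / (2 * π) = μ.b / (2 * π) * w by ring]
      have he : Complex.exp ((-(μ.c * w^2 + μ.e * w) : ℝ) * Complex.I)
          * Complex.exp ((phase μ x w : ℝ) * Complex.I)
          = Complex.exp (((μ.a * x^2 + μ.d * x) : ℝ) * Complex.I)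
            * Complex.exp ((2 * π * (μ.b / (2 * π) * w * x) : ℝ) * Complex.I) := by
        rw [← Complex.exp_add, ← Complex.exp_add, ← add_mul, ← add_mul]
        congr 1
        push_cast [phase]
        field_simp
        ring
      calc K * Complex.exp ((-(μ.c * w^2 + μ.e * w) : ℝ) * Complex.I)
            * 𝓕 g (μ.b / (2 * π) * w)
            * ((starRingEnd ℂ) K * Complex.exp ((phase μ x w : ℝ) * Complex.I))
          = (K * (starRingEnd ℂ) K)
            * ((Complex.exp ((-(μ.c * w^2 + μ.e * w) : ℝ) * Complex.I)
              * Complex.exp ((phase μ x w : ℝ) * Complex.I)) * 𝓕 g (μ.b / (2 * π) * w)) := by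
            ring
        _ = C * (Complex.exp ((2 * π * (μ.b / (2 * π) * w * x) : ℝ) * Complex.I)
              * 𝓕 g (μ.b / (2 * π) * w)) := by
            rw [hKK, he, hC]; ring
    have e2 : ∫ ξ : ℝ, h ξ = 𝓕⁻ (𝓕 g) x := by
      rw [Real.fourierInv_eq', hh]
      congr 1; funext ξ; simp [RCLike.inner_apply, mul_comm]
    have e4 := MeasureTheory.Measure.integral_comp_mul_left h (μ.b / (2 * π))
    calc ∫ w : ℝ, QPFT μ f w * (starRingEnd ℂ) (Λ μ x w)
        = ∫ w : ℝ, C * h (μ.b / (2 * π) * w) :=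
          integral_congr_ae (Filter.Eventually.of_forall e1)
      _ = C * ∫ w : ℝ, h (μ.b / (2 * π) * w) := integral_const_mul _ _
      _ = C * (|(μ.b / (2 * π))⁻¹| • ∫ ξ : ℝ, h ξ) := by rw [e4]
      _ = Complex.exp (((μ.a * x^2 + μ.d * x) : ℝ) * Complex.I) * 𝓕⁻ (𝓕 g) x := by
          rw [e2, hC, Complex.real_smul]
          rw [show |(μ.b / (2 * π))⁻¹| = (2 * π) / |μ.b| by
            rw [abs_inv, abs_div, abs_of_pos (by positivity : (0:ℝ) < 2 * π), inv_div]]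
          rw [show (((|μ.b| / (2 * π) : ℝ)) : ℂ)
              * Complex.exp (((μ.a * x^2 + μ.d * x) : ℝ) * Complex.I)
              * ((((2 * π / |μ.b| : ℝ)) : ℂ) * 𝓕⁻ (𝓕 g) x)
              = ((((|μ.b| / (2 * π)) * (2 * π / |μ.b|) : ℝ)) : ℂ)
                * (Complex.exp (((μ.a * x^2 + μ.d * x) : ℝ) * Complex.I) * 𝓕⁻ (𝓕 g) x) by
            push_cast; ring]
          rw [show (|μ.b| / (2 * π)) * (2 * π / |μ.b|) = 1 by
            field_simp]
          rw [Complex.ofReal_one, one_mul]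
  filter_upwards [ae_fourier_inversion hg hFg] with x hx
  rw [stepD x, ← hx, hgdef]
  simp only
  rw [← mul_assoc, ← Complex.exp_add, ← add_mul]
  rw [show (((μ.a * x^2 + μ.d * x) : ℝ) : ℂ) + ((-(μ.a * x^2 + μ.d * x) : ℝ) : ℂ) = 0 by
    push_cast; ring, zero_mul, Complex.exp_zero, one_mul]
end
end

section
/- Shift property of the Q-QPFT: for f ∈ L¹(ℝ²,ℍ) and k = (k₁,k₂) ∈ ℝ², Q^ℍ_{μ₁,μ₂}[f(·-k)](w) = e^{-iφ₁(w₁,k₁)} · Q^ℍ_{μ₁,μ₂}[f](w₁ + 2(a₁/b₁)k₁, w₂ + 2(a₂/b₂)k₂) · e^{-jφ₂(w₂,k₂)}, where φ_s(w_s,k_s) = a_s k_s² + d_s k_s + b_s k_s w_s - 4(a_s²c_s/b_s²)k_s² - 4(a_s/b_s)c_s w_s k_s - 2(a_s e_s/b_s)k_s for s = 1, 2. -/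
open MeasureTheory Complex
open scoped ENNReal

noncomputable section

abbrev ℍ := Quaternion ℝ

/-- Embedding of ℂ into ℍ along the i-axis. -/
def Ci (z : ℂ) : ℍ := ⟨z.re, z.im, 0, 0⟩
/-- Embedding of ℂ into ℍ along the j-axis. -/
def Cj (z : ℂ) : ℍ := ⟨z.re, 0, z.im, 0⟩

/-- quaternion exponential e^{iθ} -/
def expi (θ : ℝ) : ℍ := Ci (Complex.exp (θ * Complex.I))
/-- quaternion exponential e^{jθ} -/
def expj (θ : ℝ) : ℍ := Cj (Complex.exp (θ * Complex.I))

/-- left quadratic-phase kernel Λ^i_{μ}(x,w) -/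
def kerI (μ : QP) (x w : ℝ) : ℍ :=
  Ci (csqrt (μ.b * Complex.I / (2 * Real.pi))) * expi (-(phase μ x w))

/-- right quadratic-phase kernel Λ^j_{μ}(x,w) -/
def kerJ (μ : QP) (x w : ℝ) : ℍ :=
  Cj (csqrt (μ.b * Complex.I / (2 * Real.pi))) * expj (-(phase μ x w))

/-- two-sided quaternion quadratic-phase Fourier transform -/
def QQPFT (μ₁ μ₂ : QP) (f : ℝ × ℝ → ℍ) (w : ℝ × ℝ) : ℍ :=
  ∫ x : ℝ × ℝ, kerI μ₁ x.1 w.1 * f x * kerJ μ₂ x.2 w.2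

/-- two-sided quaternion Fourier transform -/
def QFT (f : ℝ × ℝ → ℍ) (w : ℝ × ℝ) : ℍ :=
  (1 / (2 * Real.pi)) • ∫ x : ℝ × ℝ, expi (-(x.1 * w.1)) * f x * expj (-(x.2 * w.2))


-- auxiliary lemmas
lemma Ci_mul (z w : ℂ) : Ci (z * w) = Ci z * Ci w := by
  ext <;> simp only [Quaternion.re_mul, Quaternion.imI_mul, Quaternion.imJ_mul, Quaternion.imK_mul] <;> simp [Ci]

lemma Cj_mul (z w : ℂ) : Cj (z * w) = Cj z * Cj w := by
  ext <;> simp only [Quaternion.re_mul, Quaternion.imI_mul, Quaternion.imJ_mul, Quaternion.imK_mul] <;> simp [Cj]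

lemma Ci_comm (z w : ℂ) : Ci z * Ci w = Ci w * Ci z := by
  rw [← Ci_mul, ← Ci_mul, mul_comm]

lemma Cj_comm (z w : ℂ) : Cj z * Cj w = Cj w * Cj z := by
  rw [← Cj_mul, ← Cj_mul, mul_comm]

lemma Ci_left_comm (a b c : ℂ) : Ci a * (Ci b * Ci c) = Ci b * (Ci a * Ci c) := by
  rw [← Ci_mul, ← Ci_mul, ← Ci_mul, ← Ci_mul]
  congr 1
  ring

lemma Cj_right_comm (a b c : ℂ) : Cj a * (Cj b * Cj c) = Cj a * Cj c * Cj b := by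
  rw [← Cj_mul, ← Cj_mul, ← Cj_mul, ← Cj_mul]
  congr 1
  ring

lemma expi_add (a b : ℝ) : expi (a + b) = expi a * expi b := by
  rw [expi, expi, expi, ← Ci_mul, ← Complex.exp_add]
  congr 1
  push_cast
  ring

lemma expj_add (a b : ℝ) : expj (a + b) = expj a * expj b := by
  rw [expj, expj, expj, ← Cj_mul, ← Complex.exp_add]
  congr 1
  push_cast
  ring

lemma norm_Ci (z : ℂ) : ‖Ci z‖ = ‖z‖ := by
  have h : ‖Ci z‖ ^ 2 = ‖z‖ ^ 2 := by
    rw [sq, ← Quaternion.normSq_eq_norm_mul_self, Quaternion.normSq_def',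
      Complex.sq_norm]
    simp [Ci, Complex.normSq_apply]
    ring
  nlinarith [norm_nonneg (Ci z), norm_nonneg z]

lemma norm_Cj (z : ℂ) : ‖Cj z‖ = ‖z‖ := by
  have h : ‖Cj z‖ ^ 2 = ‖z‖ ^ 2 := by
    rw [sq, ← Quaternion.normSq_eq_norm_mul_self, Quaternion.normSq_def',
      Complex.sq_norm]
    simp [Cj, Complex.normSq_apply]
    ring
  nlinarith [norm_nonneg (Cj z), norm_nonneg z]

lemma norm_expi (θ : ℝ) : ‖expi θ‖ = 1 := by
  rw [expi, norm_Ci, Complex.norm_exp]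
  simp

lemma norm_expj (θ : ℝ) : ‖expj θ‖ = 1 := by
  rw [expj, norm_Cj, Complex.norm_exp]
  simp

lemma norm_kerI (μ : QP) (x w : ℝ) :
    ‖kerI μ x w‖ = ‖csqrt (μ.b * Complex.I / (2 * Real.pi))‖ := by
  rw [kerI, norm_mul, norm_Ci, norm_expi, mul_one]

lemma norm_kerJ (μ : QP) (x w : ℝ) :
    ‖kerJ μ x w‖ = ‖csqrt (μ.b * Complex.I / (2 * Real.pi))‖ := by
  rw [kerJ, norm_mul, norm_Cj, norm_expj, mul_one]

def qI : ℍ := ⟨0,1,0,0⟩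
def qJ : ℍ := ⟨0,0,1,0⟩

lemma continuous_Ci : Continuous Ci := by
  have : Ci = fun z : ℂ => ((z.re : ℍ) + z.im • qI) := by
    funext z; ext <;> simp <;> simp [Ci, qI]
  rw [this]
  exact (Quaternion.continuous_coe.comp Complex.continuous_re).add
    ((Complex.continuous_im).smul continuous_const)

lemma continuous_Cj : Continuous Cj := by
  have : Cj = fun z : ℂ => ((z.re : ℍ) + z.im • qJ) := by
    funext z; ext <;> simp <;> simp [Cj, qJ]
  rw [this]
  exact (Quaternion.continuous_coe.comp Complex.continuous_re).add
    ((Complex.continuous_im).smul continuous_const)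

lemma continuous_expi : Continuous expi :=
  continuous_Ci.comp (Complex.continuous_exp.comp
    ((Complex.continuous_ofReal).mul continuous_const))

lemma continuous_expj : Continuous expj :=
  continuous_Cj.comp (Complex.continuous_exp.comp
    ((Complex.continuous_ofReal).mul continuous_const))

lemma continuous_kerI (μ : QP) (w : ℝ) : Continuous fun x => kerI μ x w := by
  unfold kerI
  exact continuous_const.mul (continuous_expi.comp (by unfold phase; fun_prop))

lemma continuous_kerJ (μ : QP) (w : ℝ) : Continuous fun x => kerJ μ x w := by
  unfold kerJ
  exact continuous_const.mul (continuous_expj.comp (by unfold phase; fun_prop))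

/-- shift of the left kernel -/
lemma kerI_shift (μ : QP) (hb : μ.b ≠ 0) (x w k : ℝ) :
    kerI μ (x + k) w =
      expi (-(μ.a * k^2 + μ.d * k + μ.b * k * w
          - 4 * (μ.a^2 * μ.c / μ.b^2) * k^2
          - 4 * (μ.a / μ.b) * μ.c * w * k
          - 2 * (μ.a * μ.e / μ.b) * k)) * kerI μ x (w + 2 * (μ.a / μ.b) * k) := by
  set φ := μ.a * k^2 + μ.d * k + μ.b * k * w
          - 4 * (μ.a^2 * μ.c / μ.b^2) * k^2
          - 4 * (μ.a / μ.b) * μ.c * w * k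
          - 2 * (μ.a * μ.e / μ.b) * k with hφ
  have hphase : phase μ (x + k) w = φ + phase μ x (w + 2 * (μ.a / μ.b) * k) := by
    rw [hφ]; unfold phase; field_simp; ring
  rw [kerI, kerI, hphase, neg_add, expi_add]
  simp only [expi]
  rw [Ci_left_comm, mul_assoc]

/-- shift of the right kernel -/
lemma kerJ_shift (μ : QP) (hb : μ.b ≠ 0) (x w k : ℝ) :
    kerJ μ (x + k) w =
      kerJ μ x (w + 2 * (μ.a / μ.b) * k) *
      expj (-(μ.a * k^2 + μ.d * k + μ.b * k * w
          - 4 * (μ.a^2 * μ.c / μ.b^2) * k^2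
          - 4 * (μ.a / μ.b) * μ.c * w * k
          - 2 * (μ.a * μ.e / μ.b) * k)) := by
  set φ := μ.a * k^2 + μ.d * k + μ.b * k * w
          - 4 * (μ.a^2 * μ.c / μ.b^2) * k^2
          - 4 * (μ.a / μ.b) * μ.c * w * k
          - 2 * (μ.a * μ.e / μ.b) * k with hφ
  have hphase : phase μ (x + k) w = φ + phase μ x (w + 2 * (μ.a / μ.b) * k) := by
    rw [hφ]; unfold phase; field_simp; ring
  rw [kerJ, kerJ, hphase, neg_add, expj_add]
  simp only [expj]
  rw [Cj_right_comm]

/-- Shift property of the two-sided Q-QPFT. -/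
theorem qqpft_shift (μ₁ μ₂ : QP) (hb₁ : μ₁.b ≠ 0) (hb₂ : μ₂.b ≠ 0)
    (f : ℝ × ℝ → ℍ) (hf : Integrable f) (k : ℝ × ℝ) (w : ℝ × ℝ) :
    QQPFT μ₁ μ₂ (fun x => f (x.1 - k.1, x.2 - k.2)) w
      = expi (-(μ₁.a * k.1^2 + μ₁.d * k.1 + μ₁.b * k.1 * w.1
            - 4 * (μ₁.a^2 * μ₁.c / μ₁.b^2) * k.1^2
            - 4 * (μ₁.a / μ₁.b) * μ₁.c * w.1 * k.1
            - 2 * (μ₁.a * μ₁.e / μ₁.b) * k.1)) *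
          QQPFT μ₁ μ₂ f (w.1 + 2 * (μ₁.a / μ₁.b) * k.1, w.2 + 2 * (μ₂.a / μ₂.b) * k.2) *
          expj (-(μ₂.a * k.2^2 + μ₂.d * k.2 + μ₂.b * k.2 * w.2
            - 4 * (μ₂.a^2 * μ₂.c / μ₂.b^2) * k.2^2
            - 4 * (μ₂.a / μ₂.b) * μ₂.c * w.2 * k.2
            - 2 * (μ₂.a * μ₂.e / μ₂.b) * k.2)) := by
  set w' : ℝ × ℝ := (w.1 + 2 * (μ₁.a / μ₁.b) * k.1, w.2 + 2 * (μ₂.a / μ₂.b) * k.2) with hw'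
  set E₁ : ℍ := expi (-(μ₁.a * k.1^2 + μ₁.d * k.1 + μ₁.b * k.1 * w.1
            - 4 * (μ₁.a^2 * μ₁.c / μ₁.b^2) * k.1^2
            - 4 * (μ₁.a / μ₁.b) * μ₁.c * w.1 * k.1
            - 2 * (μ₁.a * μ₁.e / μ₁.b) * k.1)) with hE₁
  set E₂ : ℍ := expj (-(μ₂.a * k.2^2 + μ₂.d * k.2 + μ₂.b * k.2 * w.2
            - 4 * (μ₂.a^2 * μ₂.c / μ₂.b^2) * k.2^2
            - 4 * (μ₂.a / μ₂.b) * μ₂.c * w.2 * k.2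
            - 2 * (μ₂.a * μ₂.e / μ₂.b) * k.2)) with hE₂
  -- the shifted integrand as a function of the new variable
  set g : ℝ × ℝ → ℍ := fun y => kerI μ₁ y.1 w'.1 * f y * kerJ μ₂ y.2 w'.2 with hg
  have hgint : Integrable g := by
    have hmeas : AEStronglyMeasurable g volume := by
      exact (((continuous_kerI μ₁ w'.1).comp continuous_fst).aestronglyMeasurable.mul
        hf.aestronglyMeasurable).mul
        (((continuous_kerJ μ₂ w'.2).comp continuous_snd).aestronglyMeasurable)
    set C := ‖csqrt (μ₁.b * Complex.I / (2 * Real.pi))‖ *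
      ‖csqrt (μ₂.b * Complex.I / (2 * Real.pi))‖ with hC
    refine (hf.norm.const_mul C).mono' hmeas ?_
    filter_upwards with y
    rw [hg]
    simp only
    rw [norm_mul, norm_mul, norm_kerI, norm_kerJ, hC]
    ring_nf
    exact le_refl _
  -- change of variables
  have hsub : (∫ x : ℝ × ℝ, kerI μ₁ x.1 w.1 * f (x.1 - k.1, x.2 - k.2) * kerJ μ₂ x.2 w.2)
      = ∫ y : ℝ × ℝ, kerI μ₁ (y.1 + k.1) w.1 * f y * kerJ μ₂ (y.2 + k.2) w.2 := by
    have := integral_sub_right_eq_self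
      (μ := (volume : Measure (ℝ × ℝ)))
      (fun y : ℝ × ℝ => kerI μ₁ (y.1 + k.1) w.1 * f y * kerJ μ₂ (y.2 + k.2) w.2) k
    rw [← this]
    congr 1
    funext x
    have hx : x - k = (x.1 - k.1, x.2 - k.2) := rfl
    rw [hx]
    simp [sub_add_cancel]
  have hker : ∀ y : ℝ × ℝ,
      kerI μ₁ (y.1 + k.1) w.1 * f y * kerJ μ₂ (y.2 + k.2) w.2 = E₁ * g y * E₂ := by
    intro y
    rw [kerI_shift μ₁ hb₁, kerJ_shift μ₂ hb₂, hg, hE₁, hE₂]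
    simp only [mul_assoc, hw']
  -- pull out the two constants via a continuous linear map
  have hpull : (∫ y, E₁ * g y * E₂) = E₁ * (∫ y, g y) * E₂ := by
    let L : ℍ →L[ℝ] ℍ := ContinuousLinearMap.mul ℝ ℍ E₁
    let R : ℍ →L[ℝ] ℍ := (ContinuousLinearMap.mul ℝ ℍ).flip E₂
    have := (R.comp L).integral_comp_comm hgint
    simpa [L, R, ContinuousLinearMap.comp_apply] using this
  calc QQPFT μ₁ μ₂ (fun x => f (x.1 - k.1, x.2 - k.2)) w
      = ∫ y : ℝ × ℝ, kerI μ₁ (y.1 + k.1) w.1 * f y * kerJ μ₂ (y.2 + k.2) w.2 := by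
        rw [QQPFT]; exact hsub
    _ = ∫ y, E₁ * g y * E₂ := by congr 1; funext y; exact hker y
    _ = E₁ * (∫ y, g y) * E₂ := hpull
    _ = E₁ * QQPFT μ₁ μ₂ f w' * E₂ := by rw [QQPFT]
end
end

section
/- The Q-QPFT of a 2D Gaussian: for f(x) = e^{-(k₁x₁² + k₂x₂²)} with k₁, k₂ > 0, Q^ℍ_{μ₁,μ₂}[f](w) = e^{-i(c₁w₁²+e₁w₁)} √(b₁i/(2(k₁+ia₁))) e^{-(b₁w₁+d₁)²/(4(k₁+ia₁))} · e^{-j(c₂w₂²+e₂w₂)} √(b₂j/(2(k₂+ja₂))) e^{-(b₂w₂+d₂)²/(4(k₂+ja₂))}, where each factor lies in the respective complex subfield ℝ⊕ℝi and ℝ⊕ℝj. -/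
open MeasureTheory Complex
open scoped ENNReal

noncomputable section

lemma Ci_ofReal (r : ℝ) : Ci (r : ℂ) = (r : ℍ) := by
  ext <;> simp [Ci]

lemma Cj_ofReal (r : ℝ) : Cj (r : ℂ) = (r : ℍ) := by
  ext <;> simp [Cj]

lemma Ci_add (z w : ℂ) : Ci (z + w) = Ci z + Ci w := by ext <;> simp only [Quaternion.re_add, Quaternion.imI_add, Quaternion.imJ_add, Quaternion.imK_add] <;> simp [Ci]
lemma Cj_add (z w : ℂ) : Cj (z + w) = Cj z + Cj w := by ext <;> simp only [Quaternion.re_add, Quaternion.imI_add, Quaternion.imJ_add, Quaternion.imK_add] <;> simp [Cj]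
lemma Ci_smul (r : ℝ) (z : ℂ) : Ci (r • z) = r • Ci z := by ext <;> simp only [Quaternion.re_smul, Quaternion.imI_smul, Quaternion.imJ_smul, Quaternion.imK_smul] <;> simp [Ci]
lemma Cj_smul (r : ℝ) (z : ℂ) : Cj (r • z) = r • Cj z := by ext <;> simp only [Quaternion.re_smul, Quaternion.imI_smul, Quaternion.imJ_smul, Quaternion.imK_smul] <;> simp [Cj]

lemma csqrt_sq {z : ℂ} (hz : z ≠ 0) : csqrt z * csqrt z = z := by
  rw [csqrt, ← Complex.cpow_add _ _ hz]
  norm_num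

lemma re_csqrt_pos {z : ℂ} (h0 : z ≠ 0) (hπ : z.arg ≠ Real.pi) : 0 < (csqrt z).re := by
  rw [csqrt, Complex.cpow_def_of_ne_zero h0, Complex.exp_re]
  refine mul_pos (Real.exp_pos _) (Real.cos_pos_of_mem_Ioo ?_)
  have h1 := Complex.neg_pi_lt_arg z
  have h2 := (Complex.arg_le_pi z).lt_of_ne hπ
  constructor <;>
    · simp only [Complex.mul_im, Complex.log_im, Complex.log_re]
      norm_num
      linarith

lemma re_csqrt_mul_pos {z w : ℂ} (hz0 : z ≠ 0) (hw0 : w ≠ 0)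
    (h : |z.arg| + |w.arg| < Real.pi) : 0 < (csqrt z * csqrt w).re := by
  rw [csqrt, csqrt, Complex.cpow_def_of_ne_zero hz0, Complex.cpow_def_of_ne_zero hw0,
    ← Complex.exp_add, Complex.exp_re]
  refine mul_pos (Real.exp_pos _) (Real.cos_pos_of_mem_Ioo ?_)
  have hz := abs_lt.mp (lt_of_le_of_lt (le_add_of_nonneg_right (abs_nonneg _)) h :
    |z.arg| < Real.pi)
  have hw := abs_lt.mp (lt_of_le_of_lt (le_add_of_nonneg_right (abs_nonneg _))
    ((add_comm |z.arg| |w.arg|) ▸ h) : |w.arg| < Real.pi)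
  have hzw := abs_lt.mp (lt_of_le_of_lt (abs_add_le _ _) h)
  constructor <;>
    · simp only [Complex.add_im, Complex.mul_im, Complex.log_im, Complex.log_re]
      norm_num
      linarith

lemma csqrt_mul_csqrt {b k a : ℝ} (hb : b ≠ 0) (hk : 0 < k) :
    csqrt ((b : ℂ) * Complex.I / (2 * (Real.pi : ℂ))) *
      csqrt ((Real.pi : ℂ) / ((k : ℂ) + (a : ℂ) * Complex.I)) =
    csqrt ((b : ℂ) * Complex.I / (2 * ((k : ℂ) + (a : ℂ) * Complex.I))) := by
  have hπ : (0:ℝ) < Real.pi := Real.pi_pos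
  set z : ℂ := (k : ℂ) + (a : ℂ) * Complex.I with hzdef
  have hzre : z.re = k := by simp [hzdef]
  have hzim : z.im = a := by simp [hzdef]
  have hz0 : z ≠ 0 := fun h => by rw [h] at hzre; simp at hzre; linarith [hzre ▸ hk]
  have h10 : ((b : ℂ) * Complex.I / (2 * (Real.pi : ℂ))) ≠ 0 := by
    apply div_ne_zero (mul_ne_zero (by exact_mod_cast hb) Complex.I_ne_zero)
    simp [Complex.ext_iff]
  have h20 : ((Real.pi : ℂ) / z) ≠ 0 := div_ne_zero (by simp [Complex.ext_iff]) hz0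
  have h30 : ((b : ℂ) * Complex.I / (2 * z)) ≠ 0 := by
    apply div_ne_zero (mul_ne_zero (by exact_mod_cast hb) Complex.I_ne_zero)
    exact mul_ne_zero two_ne_zero hz0
  -- arg bounds
  have harg1 : |((b : ℂ) * Complex.I / (2 * (Real.pi : ℂ))).arg| ≤ Real.pi / 2 := by
    rw [Complex.abs_arg_le_pi_div_two_iff]
    simp [Complex.div_re, Complex.mul_re, Complex.mul_im]
  have harg2 : |((Real.pi : ℂ) / z).arg| < Real.pi / 2 := by
    rw [Complex.abs_arg_lt_pi_div_two_iff]
    left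
    rw [Complex.div_re]
    have hns : 0 < Complex.normSq z := Complex.normSq_pos.mpr hz0
    have : (Real.pi : ℂ).re * z.re / Complex.normSq z = Real.pi * k / Complex.normSq z := by
      simp [hzre]
    simp only [Complex.ofReal_im, zero_mul, zero_div, add_zero, this]
    positivity
  -- LHS has positive real part
  have hlhs : 0 < (csqrt ((b : ℂ) * Complex.I / (2 * (Real.pi : ℂ))) *
      csqrt ((Real.pi : ℂ) / z)).re := by
    apply re_csqrt_mul_pos h10 h20
    linarith
  -- RHS has positive real part
  have hrhs : 0 < (csqrt ((b : ℂ) * Complex.I / (2 * z))).re := by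
    apply re_csqrt_pos h30
    rw [Ne, Complex.arg_eq_pi_iff]
    rintro ⟨-, him⟩
    rw [Complex.div_im] at him
    have hns : 0 < Complex.normSq (2 * z) := Complex.normSq_pos.mpr (mul_ne_zero two_ne_zero hz0)
    have h1 : ((b:ℂ) * Complex.I).im = b := by simp
    have h2 : ((b:ℂ) * Complex.I).re = 0 := by simp
    have h3 : (2 * z).re = 2 * k := by simp [hzre]
    rw [h1, h2, h3] at him
    simp only [zero_mul, zero_div, sub_zero] at him
    rcases div_eq_zero_iff.mp him with h | h
    · rcases mul_eq_zero.mp h with h' | h'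
      · exact hb h'
      · linarith
    · linarith
  -- squares agree
  have hsq : (csqrt ((b : ℂ) * Complex.I / (2 * (Real.pi : ℂ))) * csqrt ((Real.pi : ℂ) / z)) *
      (csqrt ((b : ℂ) * Complex.I / (2 * (Real.pi : ℂ))) * csqrt ((Real.pi : ℂ) / z)) =
      csqrt ((b : ℂ) * Complex.I / (2 * z)) * csqrt ((b : ℂ) * Complex.I / (2 * z)) := by
    rw [csqrt_sq h30]
    have e1 : csqrt ((b : ℂ) * Complex.I / (2 * (Real.pi : ℂ))) *
        csqrt ((Real.pi : ℂ) / z) * (csqrt ((b : ℂ) * Complex.I / (2 * (Real.pi : ℂ))) *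
        csqrt ((Real.pi : ℂ) / z)) =
        (csqrt ((b : ℂ) * Complex.I / (2 * (Real.pi : ℂ))) *
          csqrt ((b : ℂ) * Complex.I / (2 * (Real.pi : ℂ)))) *
        (csqrt ((Real.pi : ℂ) / z) * csqrt ((Real.pi : ℂ) / z)) := by ring
    rw [e1, csqrt_sq h10, csqrt_sq h20]
    have hπ0 : (Real.pi : ℂ) ≠ 0 := by simp [Complex.ext_iff]
    field_simp
  -- conclude
  set u := csqrt ((b : ℂ) * Complex.I / (2 * (Real.pi : ℂ))) * csqrt ((Real.pi : ℂ) / z)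
  set s := csqrt ((b : ℂ) * Complex.I / (2 * z))
  have : (u - s) * (u + s) = 0 := by
    have : u * u - s * s = 0 := by rw [hsq]; ring
    linear_combination this
  rcases mul_eq_zero.mp this with h | h
  · exact sub_eq_zero.mp h
  · exfalso
    have hus : u = -s := eq_neg_of_add_eq_zero_left h
    rw [hus, Complex.neg_re] at hlhs
    linarith

lemma phase_eq' (μ : QP) (k w t : ℝ) :
    ((-(phase μ t w) : ℝ) : ℂ) * Complex.I + ((-(k * t^2) : ℝ) : ℂ) =
      -((k : ℂ) + (μ.a : ℂ) * Complex.I) * (t:ℂ)^2 +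
        (-(((μ.b * w + μ.d : ℝ)) : ℂ) * Complex.I) * (t:ℂ) +
        (-((μ.c * w^2 + μ.e * w : ℝ) : ℂ) * Complex.I) := by
  simp only [phase]
  push_cast
  ring

lemma key1d_pt (μ : QP) (k w : ℝ) (t : ℝ) :
    csqrt ((μ.b : ℂ) * Complex.I / (2 * (Real.pi : ℂ))) *
      Complex.exp (((-(phase μ t w) : ℝ) : ℂ) * Complex.I) *
      ((Real.exp (-(k * t^2)) : ℝ) : ℂ) =
    csqrt ((μ.b : ℂ) * Complex.I / (2 * (Real.pi : ℂ))) *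
      Complex.exp (-((k : ℂ) + (μ.a : ℂ) * Complex.I) * (t:ℂ)^2 +
        (-(((μ.b * w + μ.d : ℝ)) : ℂ) * Complex.I) * (t:ℂ) +
        (-((μ.c * w^2 + μ.e * w : ℝ) : ℂ) * Complex.I)) := by
  rw [mul_assoc, Complex.ofReal_exp, ← Complex.exp_add, phase_eq']

lemma key1d_int (μ : QP) {k : ℝ} (hk : 0 < k) (w : ℝ) :
    Integrable (fun t : ℝ => csqrt ((μ.b : ℂ) * Complex.I / (2 * (Real.pi : ℂ))) *
      Complex.exp (((-(phase μ t w) : ℝ) : ℂ) * Complex.I) *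
      ((Real.exp (-(k * t^2)) : ℝ) : ℂ)) := by
  simp only [key1d_pt]
  have hre : (-((k : ℂ) + (μ.a : ℂ) * Complex.I)).re < 0 := by
    simp [hk]
  exact (integrable_cexp_quadratic' hre _ _).const_mul _

lemma key1d (μ : QP) (hb : μ.b ≠ 0) {k : ℝ} (hk : 0 < k) (w : ℝ) :
    ∫ t : ℝ, csqrt ((μ.b : ℂ) * Complex.I / (2 * (Real.pi : ℂ))) *
      Complex.exp (((-(phase μ t w) : ℝ) : ℂ) * Complex.I) *
      ((Real.exp (-(k * t^2)) : ℝ) : ℂ) =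
    Complex.exp (-(μ.c * w^2 + μ.e * w : ℝ) * Complex.I) *
      csqrt ((μ.b : ℂ) * Complex.I / (2 * ((k : ℂ) + (μ.a : ℂ) * Complex.I))) *
      Complex.exp (-((μ.b * w + μ.d : ℝ) : ℂ)^2 / (4 * ((k : ℂ) + (μ.a : ℂ) * Complex.I))) := by
  simp only [key1d_pt]
  rw [MeasureTheory.integral_const_mul]
  have hre : (-((k : ℂ) + (μ.a : ℂ) * Complex.I)).re < 0 := by simp [hk]
  rw [integral_cexp_quadratic hre]
  rw [neg_neg]
  set z : ℂ := (k : ℂ) + (μ.a : ℂ) * Complex.I with hzdef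
  have hz0 : z ≠ 0 := by
    intro h
    have := congrArg Complex.re h
    simp [hzdef] at this
    linarith
  have hsq : ((Real.pi : ℂ) / z) ^ (1/2 : ℂ) = csqrt ((Real.pi : ℂ) / z) := rfl
  rw [hsq]
  have hexp : ((-((μ.c * w^2 + μ.e * w : ℝ) : ℂ) * Complex.I) -
      (-(((μ.b * w + μ.d : ℝ)) : ℂ) * Complex.I)^2 / (4 * -z)) =
      (-((μ.c * w^2 + μ.e * w : ℝ) : ℂ) * Complex.I) +
      (-((μ.b * w + μ.d : ℝ) : ℂ)^2 / (4 * z)) := by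
    have hc : (-(((μ.b * w + μ.d : ℝ)) : ℂ) * Complex.I)^2 = -((μ.b * w + μ.d : ℝ) : ℂ)^2 := by
      rw [mul_pow, Complex.I_sq]; ring
    rw [hc]
    field_simp
    ring
  rw [hexp, Complex.exp_add]
  rw [show csqrt ((μ.b:ℂ) * Complex.I / (2 * (Real.pi:ℂ))) *
      (csqrt ((Real.pi : ℂ) / z) *
        (Complex.exp (-((μ.c * w^2 + μ.e * w : ℝ) : ℂ) * Complex.I) *
          Complex.exp (-((μ.b * w + μ.d : ℝ) : ℂ)^2 / (4 * z)))) =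
      Complex.exp (-((μ.c * w^2 + μ.e * w : ℝ) : ℂ) * Complex.I) *
      (csqrt ((μ.b:ℂ) * Complex.I / (2 * (Real.pi:ℂ))) * csqrt ((Real.pi : ℂ) / z)) *
          Complex.exp (-((μ.b * w + μ.d : ℝ) : ℂ)^2 / (4 * z)) by ring]
  rw [csqrt_mul_csqrt hb hk]

def CiLM : ℂ →L[ℝ] ℍ :=
  LinearMap.mkContinuous
    { toFun := Ci
      map_add' := Ci_add
      map_smul' := Ci_smul } 1
    (fun z => by show ‖Ci z‖ ≤ 1 * ‖z‖; rw [norm_Ci, one_mul])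

def CjLM : ℂ →L[ℝ] ℍ :=
  LinearMap.mkContinuous
    { toFun := Cj
      map_add' := Cj_add
      map_smul' := Cj_smul } 1
    (fun z => by show ‖Cj z‖ ≤ 1 * ‖z‖; rw [norm_Cj, one_mul])

@[simp] lemma CiLM_apply (z : ℂ) : CiLM z = Ci z := rfl
@[simp] lemma CjLM_apply (z : ℂ) : CjLM z = Cj z := rfl

lemma integral_Ci_mul_Cj {F G : ℝ → ℂ} (hF : Integrable F) (hG : Integrable G) :
    ∫ x : ℝ × ℝ, Ci (F x.1) * Cj (G x.2) = Ci (∫ t, F t) * Cj (∫ t, G t) := by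
  have hCiF : Integrable (fun t => Ci (F t)) := CiLM.integrable_comp hF
  have hCjG : Integrable (fun t => Cj (G t)) := CjLM.integrable_comp hG
  have hbound : Integrable (fun x : ℝ × ℝ => ‖F x.1‖ * ‖G x.2‖)
      ((volume : Measure ℝ).prod volume) := (hF.norm.mul_prod hG.norm :)
  have hmeas : AEStronglyMeasurable (fun x : ℝ × ℝ => Ci (F x.1) * Cj (G x.2))
      ((volume : Measure ℝ).prod volume) := hCiF.1.comp_fst.mul hCjG.1.comp_snd
  have hint : Integrable (fun x : ℝ × ℝ => Ci (F x.1) * Cj (G x.2))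
      ((volume : Measure ℝ).prod volume) := by
    refine hbound.mono' hmeas (Filter.Eventually.of_forall fun x => ?_)
    rw [norm_mul, norm_Ci, norm_Cj]
  have hvol : (volume : Measure (ℝ × ℝ)) = (volume : Measure ℝ).prod volume :=
    (MeasureTheory.Measure.volume_eq_prod ℝ ℝ)
  rw [show (∫ x : ℝ × ℝ, Ci (F x.1) * Cj (G x.2)) =
      ∫ x : ℝ × ℝ, Ci (F x.1) * Cj (G x.2) ∂((volume : Measure ℝ).prod volume) by rw [← hvol]]
  rw [MeasureTheory.integral_prod _ hint]
  have h1 : ∀ x : ℝ, (∫ y : ℝ, Ci (F x) * Cj (G y)) = Ci (F x) * Cj (∫ t, G t) := by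
    intro x
    have h0 := (ContinuousLinearMap.mul ℝ ℍ (Ci (F x))).integral_comp_comm hCjG
    simp only [ContinuousLinearMap.mul_apply'] at h0
    have hGe : (∫ x : ℝ, Cj (G x)) = Cj (∫ t, G t) := CjLM.integral_comp_comm hG
    rw [h0, hGe]
  simp only [h1]
  have h2 := ((ContinuousLinearMap.mul ℝ ℍ).flip (Cj (∫ t, G t))).integral_comp_comm hCiF
  simp only [ContinuousLinearMap.flip_apply, ContinuousLinearMap.mul_apply'] at h2
  have hFe : (∫ x : ℝ, Ci (F x)) = Ci (∫ t, F t) := CiLM.integral_comp_comm hF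
  rw [h2, hFe]
/-- The Q-QPFT of a 2D Gaussian `f(x) = e^{-(k₁x₁² + k₂x₂²)}`. -/
theorem qqpft_gaussian (μ₁ μ₂ : QP) (hb₁ : μ₁.b ≠ 0) (hb₂ : μ₂.b ≠ 0)
    (k₁ k₂ : ℝ) (hk₁ : 0 < k₁) (hk₂ : 0 < k₂) (w : ℝ × ℝ) :
    QQPFT μ₁ μ₂ (fun x => ((Real.exp (-(k₁ * x.1^2 + k₂ * x.2^2)) : ℝ) : ℍ)) w
      = Ci (Complex.exp (-(μ₁.c * w.1^2 + μ₁.e * w.1 : ℝ) * Complex.I) *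
            csqrt (μ₁.b * Complex.I / (2 * ((k₁ : ℂ) + (μ₁.a : ℂ) * Complex.I))) *
            Complex.exp (-((μ₁.b * w.1 + μ₁.d : ℝ) : ℂ)^2 /
              (4 * ((k₁ : ℂ) + (μ₁.a : ℂ) * Complex.I)))) *
        Cj (Complex.exp (-(μ₂.c * w.2^2 + μ₂.e * w.2 : ℝ) * Complex.I) *
            csqrt (μ₂.b * Complex.I / (2 * ((k₂ : ℂ) + (μ₂.a : ℂ) * Complex.I))) *
            Complex.exp (-((μ₂.b * w.2 + μ₂.d : ℝ) : ℂ)^2 /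
              (4 * ((k₂ : ℂ) + (μ₂.a : ℂ) * Complex.I)))) := by
  have hF : Integrable (fun t : ℝ => csqrt ((μ₁.b : ℂ) * Complex.I / (2 * (Real.pi : ℂ))) *
      Complex.exp (((-(phase μ₁ t w.1) : ℝ) : ℂ) * Complex.I) *
      ((Real.exp (-(k₁ * t^2)) : ℝ) : ℂ)) := key1d_int μ₁ hk₁ w.1
  have hG : Integrable (fun t : ℝ => csqrt ((μ₂.b : ℂ) * Complex.I / (2 * (Real.pi : ℂ))) *
      Complex.exp (((-(phase μ₂ t w.2) : ℝ) : ℂ) * Complex.I) *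
      ((Real.exp (-(k₂ * t^2)) : ℝ) : ℂ)) := key1d_int μ₂ hk₂ w.2
  have hassoc : ∀ A B C D E F : ℍ, A * B * (C * D) * (E * F) = (A * B * C) * (D * (E * F)) :=
    fun A B C D E F => by simp only [mul_assoc]
  have hint_eq : ∀ x : ℝ × ℝ,
      kerI μ₁ x.1 w.1 * ((Real.exp (-(k₁ * x.1^2 + k₂ * x.2^2)) : ℝ) : ℍ) * kerJ μ₂ x.2 w.2
        = Ci (csqrt ((μ₁.b : ℂ) * Complex.I / (2 * (Real.pi : ℂ))) *
            Complex.exp (((-(phase μ₁ x.1 w.1) : ℝ) : ℂ) * Complex.I) *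
            ((Real.exp (-(k₁ * x.1^2)) : ℝ) : ℂ)) *
          Cj (csqrt ((μ₂.b : ℂ) * Complex.I / (2 * (Real.pi : ℂ))) *
            Complex.exp (((-(phase μ₂ x.2 w.2) : ℝ) : ℂ) * Complex.I) *
            ((Real.exp (-(k₂ * x.2^2)) : ℝ) : ℂ)) := by
    intro x
    rw [kerI, kerJ, expi, expj]
    rw [show Real.exp (-(k₁ * x.1^2 + k₂ * x.2^2))
        = Real.exp (-(k₁ * x.1^2)) * Real.exp (-(k₂ * x.2^2)) by
      rw [← Real.exp_add]; ring_nf]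
    rw [Quaternion.coe_mul]
    rw [← Ci_ofReal (Real.exp (-(k₁ * x.1^2))), ← Cj_ofReal (Real.exp (-(k₂ * x.2^2)))]
    rw [hassoc]
    rw [← Ci_mul, ← Ci_mul, ← Cj_mul, ← Cj_mul]
    congr 1
    congr 1
    ring
  rw [QQPFT]
  rw [MeasureTheory.integral_congr_ae (Filter.Eventually.of_forall hint_eq)]
  rw [integral_Ci_mul_Cj hF hG, key1d μ₁ hb₁ hk₁ w.1, key1d μ₂ hb₂ hk₂ w.2]
end
end
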